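/- Let s be a nonzero complex number and γ = s², and define R̂_{v,j} = s^{v+j-2} · Σ_{k=1}^{min(v,j)} C(v-1,k-1)·C(j-1,k-1)·(1 - 1/γ)^{k-1} for positive integers v, j. Then for every positive integer j, the following identity of formal power series in ε over ℂ holds: (1 − sε)^j · Σ_{v=1}^{∞} R̂_{v,j} ε^{v-1} = s^{j-1} · (1 − s^{-1}ε)^{j-1}. Equivalently, the generating function Σ_{v≥1} R̂_{v,j} ε^{v-1} equals s^{j-1}(1 − s^{-1}ε)^{j-1}/(1 − sε)^{j}. -/

import Mathlib

/-- The entry `R̂_{v,j}` (for `1 ≤ v, j`), where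
`R̂_{v,j} = s^{v+j-2} · Σ_{k=1}^{min(v,j)} C(v-1,k-1)·C(j-1,k-1)·(1 - 1/s²)^{k-1}`. -/
noncomputable def Rhat (s : ℂ) (v j : ℕ) : ℂ :=
  s ^ (v + j - 2) *
    ∑ k ∈ Finset.range (min v j),
      (Nat.choose (v - 1) k : ℂ) * (Nat.choose (j - 1) k : ℂ) * (1 - 1 / s ^ 2) ^ k

namespace RhatAux

open PowerSeries Finset

lemma base : (1 - X : ℂ⟦X⟧) * PowerSeries.mk (fun v => ((v.choose 0 : ℕ) : ℂ)) = 1 := by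
  ext n
  cases n with
  | zero => simp
  | succ n => simp [sub_mul, coeff_succ_X_mul]

lemma step (k : ℕ) : (1 - X : ℂ⟦X⟧) * PowerSeries.mk (fun v => ((v.choose (k+1) : ℕ) : ℂ))
    = X * PowerSeries.mk (fun v => ((v.choose k : ℕ) : ℂ)) := by
  ext n
  cases n with
  | zero => simp [Nat.choose_eq_zero_of_lt]
  | succ n =>
      simp [sub_mul, coeff_succ_X_mul, Nat.choose_succ_succ]

lemma chooseGF (k : ℕ) :
    (1 - X : ℂ⟦X⟧)^(k+1) * PowerSeries.mk (fun v => ((v.choose k : ℕ) : ℂ)) = X ^ k := by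
  induction k with
  | zero => simpa using base
  | succ k ih =>
      have : (1 - X : ℂ⟦X⟧)^(k+2) * PowerSeries.mk (fun v => ((v.choose (k+1) : ℕ) : ℂ))
          = (1 - X)^(k+1) * ((1 - X) * PowerSeries.mk (fun v => ((v.choose (k+1) : ℕ) : ℂ))) := by
        ring
      rw [this, step, ← mul_assoc, mul_comm ((1-X:ℂ⟦X⟧)^(k+1)) X, mul_assoc, ih]
      ring

lemma chooseGFs (s : ℂ) (k : ℕ) :
    (1 - PowerSeries.C s * X)^(k+1) *
      PowerSeries.mk (fun v => ((v.choose k : ℕ) : ℂ) * s ^ v) = (PowerSeries.C s * X) ^ k := by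
  have h := congrArg (rescale s) (chooseGF k)
  simp only [map_mul, map_pow, map_sub, map_one, rescale_X] at h
  convert h using 3
  ext n
  simp [coeff_rescale, mul_comm]

lemma mk_decomp (s : ℂ) (j : ℕ) (hj : 0 < j) :
    PowerSeries.mk (fun v => Rhat s (v + 1) j) =
      ∑ k ∈ range j, PowerSeries.C (s ^ (j-1) * ((j-1).choose k : ℂ) * (1 - 1 / s^2) ^ k) *
        PowerSeries.mk (fun v => ((v.choose k : ℕ) : ℂ) * s ^ v) := by
  ext v
  simp only [coeff_mk, map_sum, PowerSeries.coeff_C_mul, coeff_mk]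
  rw [Rhat]
  have hexp : v + 1 + j - 2 = (j - 1) + v := by omega
  have hsub : range (min (v+1) j) ⊆ range j := by
    apply range_subset_range.2; omega
  rw [hexp, pow_add, ← Finset.sum_subset hsub]
  · simp only [Nat.add_sub_cancel]
    rw [Finset.mul_sum]
    apply Finset.sum_congr rfl
    intro k hk
    ring
  · intro k hk hk'
    simp only [mem_range] at hk hk'
    have : v < k := by omega
    simp [Nat.choose_eq_zero_of_lt this]

end RhatAux

open RhatAux Finset in
open PowerSeries in
theorem Rhat_generating_function (s : ℂ) (hs : s ≠ 0) (j : ℕ) (hj : 0 < j) :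
    (1 - PowerSeries.C s * PowerSeries.X) ^ j *
        PowerSeries.mk (fun v => Rhat s (v + 1) j) =
      PowerSeries.C (s ^ (j - 1)) *
        (1 - PowerSeries.C s⁻¹ * PowerSeries.X) ^ (j - 1) := by
  rw [mk_decomp s j hj, Finset.mul_sum]
  have hterm : ∀ k ∈ range j,
      (1 - C s * X)^j * (C (s ^ (j-1) * ((j-1).choose k : ℂ) * (1 - 1 / s^2) ^ k) *
          PowerSeries.mk (fun v => ((v.choose k : ℕ) : ℂ) * s ^ v))
      = C (s ^ (j-1)) * ((C (1 - 1 / s^2) * (C s * X)) ^ k *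
          (1 - C s * X) ^ (j - 1 - k) * (((j-1).choose k : ℕ) : ℂ⟦X⟧)) := by
    intro k hk
    simp only [mem_range] at hk
    have hpow : (1 - C s * X)^j = (1 - C s * X)^(j-1-k) * (1 - C s * X)^(k+1) := by
      rw [← pow_add]; congr 1; omega
    rw [hpow, show ∀ (a b c d : ℂ⟦X⟧), a*b*(c*d) = c*(a*(b*d)) from fun a b c d => by ring,
      chooseGFs]
    simp only [map_mul, map_pow, mul_pow, ← map_natCast (C (R := ℂ))]
    ring
  rw [Finset.sum_congr rfl hterm, ← Finset.mul_sum]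
  congr 1
  have hr : range j = range ((j-1) + 1) := by congr 1; omega
  rw [hr, ← add_pow]
  congr 1
  have hc : ((1:ℂ) - 1/s^2) * s = s - s⁻¹ := by
    field_simp
  rw [← mul_assoc, ← map_mul, hc, map_sub]
  ring
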